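/- arXiv:2304.02775 — 3 statements merged into one kernel-verified Lean document; each statement's English description precedes it below -/
import Mathlib

section
/- Under Assumptions A1 and A2, the Metropolis–Hastings transition kernel K satisfies the Feller property: for every sequence {x_n} ⊂ S with x_n → x ∈ S, the measures K(x_n, ·) converge weakly to K(x, ·), i.e. ∫ f(y) K(x_n, dy) → ∫ f(y) K(x, dy) for every bounded continuous f : S → ℝ. -/
open MeasureTheory ProbabilityTheory Filter Set Metric
open scoped ENNReal NNReal Topology

noncomputable section

namespace MHLDP

variable {α : Type*}

open Classical in
/-- Relative entropy `R(μ‖ν) = ∫ log (dμ/dν) dμ` if `μ ≪ ν` (and the integral exists),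
`+∞` otherwise. -/
def relEnt [MeasurableSpace α] (μ ν : Measure α) : ℝ≥0∞ :=
  if μ ≪ ν ∧ Integrable (fun x => Real.log ((μ.rnDeriv ν x).toReal)) μ
  then ENNReal.ofReal (∫ x, Real.log ((μ.rnDeriv ν x).toReal) ∂μ)
  else ⊤

variable {d : ℕ} {S : Set (EuclideanSpace ℝ (Fin d))}

/-- Lebesgue measure on (the subtype) `S ⊆ ℝ^d`. -/
def leb (S : Set (EuclideanSpace ℝ (Fin d))) : Measure S :=
  Measure.comap Subtype.val volume

/-- The Hastings ratio `min{1, π(y)J(x|y)/(π(x)J(y|x))}`, set to `1` when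
`π(x)J(y|x) = 0`.  Here `Jd x y` denotes the density `J(y|x)`. -/
def hastingsRatio (πd : S → ℝ) (Jd : S → S → ℝ) (x y : S) : ℝ :=
  if πd x * Jd x y = 0 then 1 else min 1 ((πd y * Jd y x) / (πd x * Jd x y))

/-- The Lebesgue density `a(x,y)` of the acceptance part of the MH kernel. -/
def accDens (πd : S → ℝ) (Jd : S → S → ℝ) (x y : S) : ℝ :=
  hastingsRatio πd Jd x y * Jd x y

/-- The acceptance sub-probability kernel `a(x,dy)`. -/
def acc (πd : S → ℝ) (Jd : S → S → ℝ) (x : S) : Measure S :=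
  (leb S).withDensity (fun y => ENNReal.ofReal (accDens πd Jd x y))

/-- The rejection probability `r(x) = 1 - a(x,S)`. -/
def rej (πd : S → ℝ) (Jd : S → S → ℝ) (x : S) : ℝ :=
  1 - (acc πd Jd x Set.univ).toReal

/-- The Metropolis–Hastings transition kernel `K(x,dy) = a(x,dy) + r(x) δ_x(dy)`. -/
def mhK (πd : S → ℝ) (Jd : S → S → ℝ) (x : S) : Measure S :=
  acc πd Jd x + ENNReal.ofReal (rej πd Jd x) • Measure.dirac x

/-- `μ` is an invariant measure for the transition kernel `q`. -/
def Invariant [MeasurableSpace α] (μ : Measure α) (q : α → Measure α) : Prop :=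
  ∀ A : Set α, MeasurableSet A → μ A = ∫⁻ x, q x A ∂μ

/-- The rate function `I(ν) = inf_q ∫ R(q(x,·) ‖ K(x,·)) ν(dx)`, infimum over Markov
transition kernels `q` with invariant measure `ν`. -/
def rateI [MeasurableSpace α] (K : α → Measure α) (ν : Measure α) : ℝ≥0∞ :=
  ⨅ (q : Kernel α α) (_ : IsMarkovKernel q) (_ : Invariant ν (fun x => q x)),
    ∫⁻ x, relEnt (q x) (K x) ∂ν

/-- The joint measure `(μ ⊗ K)(dx dy) = μ(dx) K(x,dy)` on `S × S`. -/
def prodK [MeasurableSpace α] (μ : Measure α) (K : α → Measure α) : Measure (α × α) :=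
  μ.bind fun x => (K x).map fun y => (x, y)

/-- The rate function `I(μ) = inf_{γ ∈ A(μ)} R(γ ‖ μ ⊗ K)`, infimum over probability
measures on `S × S` with both marginals equal to `μ`. -/
def rateEmp [MeasurableSpace α] (K : α → Measure α) (μ : Measure α) : ℝ≥0∞ :=
  ⨅ (γ : Measure (α × α)) (_ : IsProbabilityMeasure γ)
    (_ : γ.map Prod.fst = μ) (_ : γ.map Prod.snd = μ), relEnt γ (prodK μ K)

/-- Assumptions (A.1) and (A.2): `π` is a probability measure on `S` with continuous
density `πd` w.r.t. Lebesgue measure, equivalent to Lebesgue measure; the proposal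
distributions `J(·|x)` are probability measures with jointly continuous, bounded,
strictly positive density `Jd x · = J(·|x)`, absolutely continuous w.r.t. `π`. -/
structure Assumptions (πd : S → ℝ) (Jd : S → S → ℝ) (π : Measure S) : Prop where
  measS : MeasurableSet S
  prob_pi : IsProbabilityMeasure π
  pi_nonneg : ∀ x, 0 ≤ πd x
  pi_dens : π = (leb S).withDensity (fun x => ENNReal.ofReal (πd x))
  pi_cont : Continuous πd
  pi_ac : π ≪ leb S
  leb_ac : leb S ≪ π
  J_nonneg : ∀ x y, 0 ≤ Jd x y
  J_dens_prob : ∀ x, IsProbabilityMeasure ((leb S).withDensity (fun y => ENNReal.ofReal (Jd x y)))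
  J_ac_pi : ∀ x, (leb S).withDensity (fun y => ENNReal.ofReal (Jd x y)) ≪ π
  J_cont : Continuous (fun p : S × S => Jd p.1 p.2)
  J_bdd : ∃ C : ℝ, ∀ x y, Jd x y ≤ C
  J_pos : ∀ x y, 0 < Jd x y

/-- Assumption (A.3): existence of a Lyapunov function `U` for the kernel `K`. -/
structure Lyapunov (K : S → Measure S) (U : S → ℝ) : Prop where
  nonneg : ∀ x, 0 ≤ U x
  lb : ∃ M : ℝ, ∀ x, (M : EReal) ≤ (U x : EReal)
        - ENNReal.log (∫⁻ y, ENNReal.ofReal (Real.exp (U y)) ∂(K x))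
  cpt : ∀ M : ℝ, IsCompact (closure {x : S | (U x : EReal)
        - ENNReal.log (∫⁻ y, ENNReal.ofReal (Real.exp (U y)) ∂(K x)) ≤ (M : EReal)})
  bdd_on_cpt : ∀ C : Set S, IsCompact C → ∃ B : ℝ, ∀ x ∈ C, U x ≤ B

/-- The law of `(X_0, …, X_n)` for the Markov chain with transition kernel `K`
started at `x`. -/
def chainLaw [MeasurableSpace α] (K : α → Measure α) (x : α) : (n : ℕ) → Measure (Fin (n + 1) → α)
  | 0 => Measure.dirac (fun _ => x)
  | (n + 1) => (chainLaw K x n).bind (fun p => (K (p (Fin.last n))).map (fun y => Fin.snoc p y))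

/-- The empirical measure of a finite path. -/
def empMeas [MeasurableSpace α] {n : ℕ} (p : Fin (n + 1) → α) : Measure α :=
  ((n : ℝ≥0∞) + 1)⁻¹ • ∑ i : Fin (n + 1), Measure.dirac (p i)

lemma empMeas_isProbabilityMeasure [MeasurableSpace α] {n : ℕ} (p : Fin (n + 1) → α) :
    IsProbabilityMeasure (empMeas p) := by
  constructor
  simp only [empMeas, Measure.smul_apply, Measure.finset_sum_apply, measure_univ, smul_eq_mul]
  rw [Finset.sum_const, Finset.card_univ, Fintype.card_fin, nsmul_eq_mul, mul_one]
  rw [show ((n + 1 : ℕ) : ℝ≥0∞) = (n : ℝ≥0∞) + 1 by push_cast; ring]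
  exact ENNReal.inv_mul_cancel (by simp) (by finiteness)

/-- The empirical measure of a finite path, as a probability measure. -/
def empProb [MeasurableSpace α] {n : ℕ} (p : Fin (n + 1) → α) : ProbabilityMeasure α :=
  ⟨empMeas p, empMeas_isProbabilityMeasure p⟩

end MHLDP

namespace MHLDP

variable {α : Type*} {d : ℕ} {S : Set (EuclideanSpace ℝ (Fin d))}

/-- The `k`-step transition probabilities of the kernel `K`. -/
def kIter [MeasurableSpace α] (K : α → Measure α) : ℕ → α → Measure α
  | 0, x => Measure.dirac x
  | (n + 1), x => (kIter K n x).bind K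

/-- Ergodicity of the stationary Markov chain with initial (invariant) distribution `μ` and
transition kernel `q`: every a.s. invariant set is trivial. -/
def KernelErgodic [MeasurableSpace α] (μ : Measure α) (q : α → Measure α) : Prop :=
  Invariant μ q ∧ ∀ A : Set α, MeasurableSet A →
    (∀ᵐ x ∂μ, x ∈ A → q x A = 1) → μ A = 0 ∨ μ A = 1

/-- The set `S₊ = {x ∈ S : π(x) > 0}`. -/
def Splus (πd : S → ℝ) : Set S := {x | 0 < πd x}

/-- The modulus `Δ_ε(x)` of the ball-smoothing construction. -/
def Delta (πd : S → ℝ) (Jd : S → S → ℝ) (ε : ℝ) (x : S) : ℝ :=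
  sSup {t : ℝ | ∀ y z : S, dist y x < t → dist z x < t →
    |Real.log (accDens πd Jd x x) - Real.log (accDens πd Jd y z)| < ε ∧
    |Real.log (rej πd Jd x) - Real.log (rej πd Jd y)| < ε}

/-- The random radius `ϱ^n` of the ball-smoothing construction, given the sample points `Y`. -/
def rad (πd : S → ℝ) (Jd : S → S → ℝ) (n : ℕ) (Y : ℕ → S) : ℝ :=
  sInf ({1 / (n : ℝ)}
    ∪ (Set.range fun i : Fin n => Delta πd Jd (1 / (n : ℝ)) (Y (i : ℕ)))
    ∪ {t : ℝ | ∃ i j : Fin n, Y (i : ℕ) ≠ Y (j : ℕ) ∧ t = dist (Y (i : ℕ)) (Y (j : ℕ)) / 2}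
    ∪ (Set.range fun i : Fin n =>
        Metric.infDist ((Y (i : ℕ) : EuclideanSpace ℝ (Fin d))) (frontier S) / 2)
    ∪ (Set.range fun i : Fin n => accDens πd Jd (Y (i : ℕ)) (Y (i : ℕ))))

/-- The volume `V_n = λ(B_{ϱ^n}(0))`. -/
def Vn (πd : S → ℝ) (Jd : S → S → ℝ) (n : ℕ) (Y : ℕ → S) : ℝ≥0∞ :=
  volume (Metric.ball (0 : EuclideanSpace ℝ (Fin d)) (rad πd Jd n Y))

/-- The smoothed random measure `ν_s^n(dx) = (1/(n V_n)) Σ_{i<n} 1{x ∈ B_{ϱ^n}(Y_i)} λ(dx)`. -/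
def smooth (πd : S → ℝ) (Jd : S → S → ℝ) (n : ℕ) (Y : ℕ → S) : Measure S :=
  ((n : ℝ≥0∞) * Vn πd Jd n Y)⁻¹ •
    (leb S).withDensity (fun x =>
      ∑ i : Fin n, if dist x (Y (i : ℕ)) < rad πd Jd n Y then (1 : ℝ≥0∞) else 0)

end MHLDP

namespace MHLDP

/-- Generalized dominated convergence ("sandwich") for `lintegral`s: if `G n ≤ B n`,
`G n → Gl` a.e., `B n → Bl` a.e., and `∫⁻ B n → ∫⁻ Bl < ∞`, then `∫⁻ G n → ∫⁻ Gl`. -/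
lemma lintegral_tendsto_sandwich {β : Type*} [MeasurableSpace β] {μ : Measure β}
    {G : ℕ → β → ℝ≥0∞} {Gl : β → ℝ≥0∞} {B : ℕ → β → ℝ≥0∞} {Bl : β → ℝ≥0∞}
    (hGm : ∀ n, Measurable (G n)) (hBm : ∀ n, Measurable (B n)) (hBlm : Measurable Bl)
    (hGB : ∀ n y, G n y ≤ B n y)
    (hGt : ∀ᵐ y ∂μ, Filter.Tendsto (fun n => G n y) Filter.atTop (nhds (Gl y)))
    (hBt : ∀ᵐ y ∂μ, Filter.Tendsto (fun n => B n y) Filter.atTop (nhds (Bl y)))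
    (hBfin : ∫⁻ y, Bl y ∂μ ≠ ⊤)
    (hBint : Filter.Tendsto (fun n => ∫⁻ y, B n y ∂μ) Filter.atTop (nhds (∫⁻ y, Bl y ∂μ))) :
    Filter.Tendsto (fun n => ∫⁻ y, G n y ∂μ) Filter.atTop (nhds (∫⁻ y, Gl y ∂μ)) := by
  have hGlBl : ∀ᵐ y ∂μ, Gl y ≤ Bl y := by
    filter_upwards [hGt, hBt] with y h1 h2
    exact le_of_tendsto_of_tendsto' h1 h2 (fun n => hGB n y)
  -- truncated sequences
  have ha : Filter.Tendsto (fun n => ∫⁻ y, min (G n y) (Bl y) ∂μ) Filter.atTop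
      (nhds (∫⁻ y, Gl y ∂μ)) := by
    refine tendsto_lintegral_of_dominated_convergence Bl
      (fun n => (hGm n).min hBlm) (fun n => ae_of_all _ fun y => min_le_right _ _) hBfin ?_
    filter_upwards [hGt, hGlBl] with y h1 hle
    have := h1.min (tendsto_const_nhds (x := Bl y) (f := Filter.atTop))
    rwa [min_eq_left hle] at this
  have hb : Filter.Tendsto (fun n => ∫⁻ y, min (B n y) (Bl y) ∂μ) Filter.atTop
      (nhds (∫⁻ y, Bl y ∂μ)) := by
    refine tendsto_lintegral_of_dominated_convergence Bl
      (fun n => (hBm n).min hBlm) (fun n => ae_of_all _ fun y => min_le_right _ _) hBfin ?_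
    filter_upwards [hBt] with y h1
    have := h1.min (tendsto_const_nhds (x := Bl y) (f := Filter.atTop))
    rwa [min_self] at this
  have hmin_fin : ∀ n, ∫⁻ y, min (B n y) (Bl y) ∂μ ≠ ⊤ := fun n =>
    ne_top_of_le_ne_top hBfin (lintegral_mono fun y => min_le_right _ _)
  -- upper bound
  have hupper : ∀ n, ∫⁻ y, G n y ∂μ ≤
      ∫⁻ y, min (G n y) (Bl y) ∂μ + (∫⁻ y, B n y ∂μ - ∫⁻ y, min (B n y) (Bl y) ∂μ) := by
    intro n
    have hpt : ∀ y, G n y ≤ min (G n y) (Bl y) + (B n y - min (B n y) (Bl y)) := by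
      intro y
      have h1 : G n y ≤ min (G n y) (Bl y) + (G n y - Bl y) := by
        rcases le_total (G n y) (Bl y) with h | h
        · rw [min_eq_left h]; exact le_self_add
        · rw [min_eq_right h, add_comm, tsub_add_cancel_of_le h]
      have h2 : G n y - Bl y ≤ B n y - min (B n y) (Bl y) :=
        tsub_le_tsub (hGB n y) (min_le_right _ _)
      exact h1.trans (add_le_add le_rfl h2)
    calc ∫⁻ y, G n y ∂μ
        ≤ ∫⁻ y, (min (G n y) (Bl y) + (B n y - min (B n y) (Bl y))) ∂μ :=
          lintegral_mono hpt
      _ = ∫⁻ y, min (G n y) (Bl y) ∂μ + ∫⁻ y, (B n y - min (B n y) (Bl y)) ∂μ :=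
          lintegral_add_left ((hGm n).min hBlm) _
      _ = ∫⁻ y, min (G n y) (Bl y) ∂μ + (∫⁻ y, B n y ∂μ - ∫⁻ y, min (B n y) (Bl y) ∂μ) := by
          rw [lintegral_sub ((hBm n).min hBlm) (hmin_fin n)
            (ae_of_all _ fun y => min_le_left _ _)]
  have hup : Filter.Tendsto
      (fun n => ∫⁻ y, min (G n y) (Bl y) ∂μ + (∫⁻ y, B n y ∂μ - ∫⁻ y, min (B n y) (Bl y) ∂μ))
      Filter.atTop (nhds (∫⁻ y, Gl y ∂μ)) := by
    have hsub := ENNReal.Tendsto.sub hBint hb (Or.inl hBfin)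
    rw [tsub_self] at hsub
    have := ha.add hsub
    rwa [add_zero] at this
  exact tendsto_of_tendsto_of_tendsto_of_le_of_le ha hup
    (fun n => lintegral_mono fun y => min_le_left _ _) hupper

section FellerAux

variable {d : ℕ} {S : Set (EuclideanSpace ℝ (Fin d))}

lemma hastingsRatio_nonneg {πd : S → ℝ} {Jd : S → S → ℝ} (hπ : ∀ z, 0 ≤ πd z)
    (hJ : ∀ z w, 0 ≤ Jd z w) (x y : S) : 0 ≤ hastingsRatio πd Jd x y := by
  unfold hastingsRatio
  split
  · exact zero_le_one
  · exact le_min zero_le_one (div_nonneg (mul_nonneg (hπ y) (hJ y x))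
      (mul_nonneg (hπ x) (hJ x y)))

lemma hastingsRatio_le_one {πd : S → ℝ} {Jd : S → S → ℝ} (x y : S) :
    hastingsRatio πd Jd x y ≤ 1 := by
  unfold hastingsRatio
  split
  · exact le_refl 1
  · exact min_le_left _ _

lemma accDens_nonneg {πd : S → ℝ} {Jd : S → S → ℝ} (hπ : ∀ z, 0 ≤ πd z)
    (hJ : ∀ z w, 0 ≤ Jd z w) (x y : S) : 0 ≤ accDens πd Jd x y :=
  mul_nonneg (hastingsRatio_nonneg hπ hJ x y) (hJ x y)

lemma accDens_le_J {πd : S → ℝ} {Jd : S → S → ℝ} (hJ : ∀ z w, 0 ≤ Jd z w) (x y : S) :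
    accDens πd Jd x y ≤ Jd x y :=
  mul_le_of_le_one_left (hJ x y) (hastingsRatio_le_one x y)

lemma accDens_continuous {πd : S → ℝ} {Jd : S → S → ℝ} {π : Measure S}
    (hA : Assumptions πd Jd π) (x : S) : Continuous (fun y => accDens πd Jd x y) := by
  have hJxy : Continuous fun y : S => Jd x y :=
    hA.J_cont.comp (continuous_const.prodMk continuous_id)
  have hJyx : Continuous fun y : S => Jd y x :=
    hA.J_cont.comp (continuous_id.prodMk continuous_const)
  by_cases hx : πd x = 0
  · have : (fun y => accDens πd Jd x y) = fun y => Jd x y := by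
      funext y
      simp [accDens, hastingsRatio, hx]
    rw [this]; exact hJxy
  · have hne : ∀ y, πd x * Jd x y ≠ 0 := fun y =>
      mul_ne_zero hx (ne_of_gt (hA.J_pos x y))
    have : (fun y => accDens πd Jd x y)
        = fun y => min 1 ((πd y * Jd y x) / (πd x * Jd x y)) * Jd x y := by
      funext y
      simp [accDens, hastingsRatio, hne y]
    rw [this]
    exact (continuous_const.min (((hA.pi_cont.mul hJyx)).div
      (continuous_const.mul hJxy) hne)).mul hJxy

lemma accDens_tendsto {πd : S → ℝ} {Jd : S → S → ℝ} {π : Measure S}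
    (hA : Assumptions πd Jd π) {xseq : ℕ → S} {x : S}
    (hx : Filter.Tendsto xseq Filter.atTop (nhds x)) {y : S} (hy : 0 < πd y ∨ 0 < πd x) :
    Filter.Tendsto (fun n => accDens πd Jd (xseq n) y) Filter.atTop
      (nhds (accDens πd Jd x y)) := by
  have hJzy : Continuous fun z : S => Jd z y :=
    hA.J_cont.comp (continuous_id.prodMk continuous_const)
  have hJyz : Continuous fun z : S => Jd y z :=
    hA.J_cont.comp (continuous_const.prodMk continuous_id)
  by_cases hπx : 0 < πd x
  · -- `accDens · y` is continuous at `x`.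
    set g : S → ℝ := fun z => min 1 ((πd y * Jd y z) / (πd z * Jd z y)) * Jd z y with hg
    have hval : ∀ z : S, 0 < πd z → accDens πd Jd z y = g z := by
      intro z hz
      have hne : πd z * Jd z y ≠ 0 := mul_ne_zero (ne_of_gt hz) (ne_of_gt (hA.J_pos z y))
      simp [accDens, hastingsRatio, hne, hg]
    have hgc : ContinuousAt g x := by
      have hne : πd x * Jd x y ≠ 0 := mul_ne_zero (ne_of_gt hπx) (ne_of_gt (hA.J_pos x y))
      exact ((continuousAt_const.min (((continuous_const.mul hJyz).continuousAt).div
        ((hA.pi_cont.mul hJzy).continuousAt) hne)).mul hJzy.continuousAt)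
    have hev : ∀ᶠ n in Filter.atTop, accDens πd Jd (xseq n) y = g (xseq n) := by
      have : ∀ᶠ n in Filter.atTop, 0 < πd (xseq n) :=
        ((hA.pi_cont.tendsto x).comp hx).eventually (eventually_gt_nhds hπx)
      exact this.mono fun n hn => hval _ hn
    have := (hgc.tendsto).comp hx
    rw [← hval x hπx] at this
    exact Filter.Tendsto.congr' (hev.mono fun n h => h.symm) this
  · -- `πd x = 0`; use `0 < πd y`.
    have hπx0 : πd x = 0 := le_antisymm (not_lt.mp hπx) (hA.pi_nonneg x)
    have hπy : 0 < πd y := hy.resolve_right hπx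
    have hlim : accDens πd Jd x y = Jd x y := by
      simp [accDens, hastingsRatio, hπx0]
    rw [hlim]
    have hJt : Filter.Tendsto (fun n => Jd (xseq n) y) Filter.atTop (nhds (Jd x y)) :=
      (hJzy.tendsto x).comp hx
    set c : ℝ := πd y * Jd y x with hc
    have hcpos : 0 < c := mul_pos hπy (hA.J_pos y x)
    have h1 : ∀ᶠ n in Filter.atTop, c / 2 < πd y * Jd y (xseq n) := by
      have : Filter.Tendsto (fun n => πd y * Jd y (xseq n)) Filter.atTop (nhds c) :=
        ((continuous_const.mul hJyz).tendsto x).comp hx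
      exact this.eventually (eventually_gt_nhds (by linarith))
    have h2 : ∀ᶠ n in Filter.atTop, πd (xseq n) * Jd (xseq n) y < c / 2 := by
      have : Filter.Tendsto (fun n => πd (xseq n) * Jd (xseq n) y) Filter.atTop
          (nhds (πd x * Jd x y)) := ((hA.pi_cont.mul hJzy).tendsto x).comp hx
      rw [hπx0, zero_mul] at this
      exact this.eventually (eventually_lt_nhds (by linarith))
    have hev : ∀ᶠ n in Filter.atTop, accDens πd Jd (xseq n) y = Jd (xseq n) y := by
      filter_upwards [h1, h2] with n hn1 hn2
      unfold accDens hastingsRatio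
      by_cases hD : πd (xseq n) * Jd (xseq n) y = 0
      · simp [hD]
      · have hDpos : 0 < πd (xseq n) * Jd (xseq n) y :=
          lt_of_le_of_ne (mul_nonneg (hA.pi_nonneg _) (le_of_lt (hA.J_pos _ _))) (Ne.symm hD)
        have hratio : (1 : ℝ) ≤ (πd y * Jd y (xseq n)) / (πd (xseq n) * Jd (xseq n) y) :=
          (one_le_div hDpos).mpr (le_of_lt (lt_trans hn2 hn1))
        simp [hD, min_eq_left hratio]
    exact Filter.Tendsto.congr' (hev.mono fun n h => h.symm) hJt

lemma ae_pi_pos {πd : S → ℝ} {Jd : S → S → ℝ} {π : Measure S}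
    (hA : Assumptions πd Jd π) : ∀ᵐ y ∂(leb S), 0 < πd y := by
  have hm : MeasurableSet {y : S | πd y = 0} :=
    hA.pi_cont.measurable (measurableSet_singleton 0)
  have hπ0 : π {y : S | πd y = 0} = 0 := by
    rw [hA.pi_dens, withDensity_apply _ hm]
    have : ∀ᵐ y ∂((leb S).restrict {y : S | πd y = 0}),
        ENNReal.ofReal (πd y) = 0 := by
      refine (ae_restrict_iff' hm).2 (ae_of_all _ fun y hy => ?_)
      simp [Set.mem_setOf_eq.mp hy]
    rw [lintegral_congr_ae this, lintegral_zero]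
  have hleb0 : (leb S) {y : S | πd y = 0} = 0 := hA.leb_ac hπ0
  filter_upwards [ae_iff.2 (by simpa using hleb0 : (leb S) {y : S | ¬ πd y ≠ 0} = 0)]
    with y hy
  exact lt_of_le_of_ne (hA.pi_nonneg y) (Ne.symm hy)

lemma lintegral_J_eq_one {πd : S → ℝ} {Jd : S → S → ℝ} {π : Measure S}
    (hA : Assumptions πd Jd π) (z : S) :
    ∫⁻ y, ENNReal.ofReal (Jd z y) ∂(leb S) = 1 := by
  have := (hA.J_dens_prob z).measure_univ
  rwa [withDensity_apply _ MeasurableSet.univ, Measure.restrict_univ] at this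

end FellerAux

/-- **Feller property of the Metropolis–Hastings kernel.** Under Assumptions (A.1)–(A.2),
if `x_n → x` in `S` then `K(x_n, ·) ⇒ K(x, ·)`: for every bounded continuous `f : S → ℝ`,
`∫ f dK(x_n,·) → ∫ f dK(x,·)`. -/
theorem mh_kernel_feller
    {d : ℕ} {S : Set (EuclideanSpace ℝ (Fin d))}
    (πd : S → ℝ) (Jd : S → S → ℝ) (π : Measure S) (hA : Assumptions πd Jd π)
    (xseq : ℕ → S) (x : S) (hx : Filter.Tendsto xseq Filter.atTop (nhds x))
    (f : S → ℝ) (hfc : Continuous f) (hfb : ∃ C : ℝ, ∀ y, |f y| ≤ C) :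
    Filter.Tendsto (fun n => ∫ y, f y ∂(mhK πd Jd (xseq n))) Filter.atTop
      (nhds (∫ y, f y ∂(mhK πd Jd x))) := by
  classical
  obtain ⟨C₀, hC₀⟩ := hfb
  set C : ℝ := |C₀| + 1 with hCdef
  have hC : ∀ y, |f y| ≤ C := fun y => (hC₀ y).trans (by
    have := le_abs_self C₀; simp only [hCdef]; linarith)
  have hCpos : 0 < C := by positivity
  -- basic facts about the acceptance density
  have hJnn : ∀ z w : S, 0 ≤ Jd z w := hA.J_nonneg
  have ham : ∀ z : S, Measurable (fun y => accDens πd Jd z y) :=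
    fun z => (accDens_continuous hA z).measurable
  have ha0 : ∀ z y : S, 0 ≤ accDens πd Jd z y :=
    fun z y => accDens_nonneg hA.pi_nonneg hJnn z y
  have haJ : ∀ z y : S, accDens πd Jd z y ≤ Jd z y := fun z y => accDens_le_J hJnn z y
  have hJzc : ∀ z : S, Continuous (fun y => Jd z y) :=
    fun z => hA.J_cont.comp (continuous_const.prodMk continuous_id)
  have hJm : ∀ z : S, Measurable (fun y => Jd z y) := fun z => (hJzc z).measurable
  have hal : ∀ z : S, ∫⁻ y, ENNReal.ofReal (accDens πd Jd z y) ∂(leb S) ≤ 1 := by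
    intro z
    calc ∫⁻ y, ENNReal.ofReal (accDens πd Jd z y) ∂(leb S)
        ≤ ∫⁻ y, ENNReal.ofReal (Jd z y) ∂(leb S) :=
          lintegral_mono fun y => ENNReal.ofReal_le_ofReal (haJ z y)
      _ = 1 := lintegral_J_eq_one hA z
  have hane : ∀ z : S, ∫⁻ y, ENNReal.ofReal (accDens πd Jd z y) ∂(leb S) ≠ ⊤ :=
    fun z => ne_top_of_le_ne_top ENNReal.one_ne_top (hal z)
  have hacc_univ : ∀ z : S, acc πd Jd z Set.univ
      = ∫⁻ y, ENNReal.ofReal (accDens πd Jd z y) ∂(leb S) := by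
    intro z
    rw [acc, withDensity_apply _ MeasurableSet.univ, Measure.restrict_univ]
  have hrej_eq : ∀ z : S, rej πd Jd z
      = 1 - (∫⁻ y, ENNReal.ofReal (accDens πd Jd z y) ∂(leb S)).toReal := by
    intro z; rw [rej, hacc_univ]
  have htoReal_le : ∀ z : S,
      (∫⁻ y, ENNReal.ofReal (accDens πd Jd z y) ∂(leb S)).toReal ≤ 1 := by
    intro z
    have := ENNReal.toReal_mono ENNReal.one_ne_top (hal z)
    simpa using this
  have hrej_nonneg : ∀ z : S, 0 ≤ rej πd Jd z := by
    intro z; rw [hrej_eq z]; linarith [htoReal_le z]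
  -- a.e. pointwise convergence of the acceptance densities
  have hpt : ∀ᵐ y ∂(leb S), Filter.Tendsto (fun n => accDens πd Jd (xseq n) y)
      Filter.atTop (nhds (accDens πd Jd x y)) :=
    (ae_pi_pos hA).mono fun y hy => accDens_tendsto hA hx (Or.inl hy)
  have hJpt : ∀ y : S, Filter.Tendsto (fun n => Jd (xseq n) y)
      Filter.atTop (nhds (Jd x y)) := fun y =>
    (((hA.J_cont.comp (continuous_id.prodMk continuous_const)).tendsto x).comp hx)
  -- sandwich (i): lintegrals of the acceptance densities converge
  have hIa : Filter.Tendsto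
      (fun n => ∫⁻ y, ENNReal.ofReal (accDens πd Jd (xseq n) y) ∂(leb S)) Filter.atTop
      (nhds (∫⁻ y, ENNReal.ofReal (accDens πd Jd x y) ∂(leb S))) := by
    refine lintegral_tendsto_sandwich (B := fun n y => ENNReal.ofReal (Jd (xseq n) y))
      (Bl := fun y => ENNReal.ofReal (Jd x y))
      (fun n => (ham _).ennreal_ofReal) (fun n => (hJm _).ennreal_ofReal)
      (hJm x).ennreal_ofReal
      (fun n y => ENNReal.ofReal_le_ofReal (haJ _ y)) ?_ ?_ ?_ ?_
    · exact hpt.mono fun y h => (ENNReal.continuous_ofReal.tendsto _).comp h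
    · exact ae_of_all _ fun y => (ENNReal.continuous_ofReal.tendsto _).comp (hJpt y)
    · rw [lintegral_J_eq_one hA x]; exact ENNReal.one_ne_top
    · simp only [lintegral_J_eq_one hA]; exact tendsto_const_nhds
  -- the shifted bounded function F = f + C ≥ 0
  set F : S → ℝ := fun y => f y + C with hFdef
  have hF0 : ∀ y, 0 ≤ F y := fun y => by
    have := abs_le.mp (hC y); simp only [hFdef]; linarith [this.1]
  have hF2C : ∀ y, F y ≤ 2 * C := fun y => by
    have := abs_le.mp (hC y); simp only [hFdef]; linarith [this.2]
  have hFc : Continuous F := hfc.add continuous_const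
  have hFbound : ∀ z y : S, F y * accDens πd Jd z y ≤ 2 * C * Jd z y := fun z y =>
    mul_le_mul (hF2C y) (haJ z y) (ha0 z y) (by positivity)
  have hFa0 : ∀ z y : S, 0 ≤ F y * accDens πd Jd z y :=
    fun z y => mul_nonneg (hF0 y) (ha0 z y)
  have h2CJ : ∀ z : S, ∫⁻ y, ENNReal.ofReal (2 * C * Jd z y) ∂(leb S)
      = ENNReal.ofReal (2 * C) := by
    intro z
    have h1 : ∀ y : S, ENNReal.ofReal (2 * C * Jd z y)
        = ENNReal.ofReal (2 * C) * ENNReal.ofReal (Jd z y) :=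
      fun y => ENNReal.ofReal_mul (by positivity)
    rw [lintegral_congr h1, lintegral_const_mul _ (hJm z).ennreal_ofReal,
      lintegral_J_eq_one hA z, mul_one]
  have hIFle : ∀ z : S, ∫⁻ y, ENNReal.ofReal (F y * accDens πd Jd z y) ∂(leb S)
      ≤ ENNReal.ofReal (2 * C) := fun z =>
    le_trans (lintegral_mono fun y => ENNReal.ofReal_le_ofReal (hFbound z y))
      (le_of_eq (h2CJ z))
  -- sandwich (ii): lintegrals of `F * accDens` converge
  have hIFa : Filter.Tendsto
      (fun n => ∫⁻ y, ENNReal.ofReal (F y * accDens πd Jd (xseq n) y) ∂(leb S)) Filter.atTop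
      (nhds (∫⁻ y, ENNReal.ofReal (F y * accDens πd Jd x y) ∂(leb S))) := by
    refine lintegral_tendsto_sandwich (B := fun n y => ENNReal.ofReal (2 * C * Jd (xseq n) y))
      (Bl := fun y => ENNReal.ofReal (2 * C * Jd x y))
      (fun n => (hFc.measurable.mul (ham _)).ennreal_ofReal)
      (fun n => (measurable_const.mul (hJm _)).ennreal_ofReal)
      (measurable_const.mul (hJm x)).ennreal_ofReal
      (fun n y => ENNReal.ofReal_le_ofReal (hFbound _ y)) ?_ ?_ ?_ ?_
    · exact hpt.mono fun y h =>
        (ENNReal.continuous_ofReal.tendsto _).comp (h.const_mul (F y))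
    · exact ae_of_all _ fun y =>
        (ENNReal.continuous_ofReal.tendsto _).comp ((hJpt y).const_mul (2 * C))
    · rw [h2CJ x]; exact ENNReal.ofReal_ne_top
    · simp only [h2CJ]; exact tendsto_const_nhds
  -- integrability of the densities
  have hInt_a : ∀ z : S, Integrable (fun y => accDens πd Jd z y) (leb S) := by
    intro z
    refine ⟨(accDens_continuous hA z).aestronglyMeasurable, ?_⟩
    rw [hasFiniteIntegral_iff_ofReal (ae_of_all _ (ha0 z))]
    exact lt_of_le_of_lt (hal z) ENNReal.one_lt_top
  have hInt_Fa : ∀ z : S, Integrable (fun y => F y * accDens πd Jd z y) (leb S) := by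
    intro z
    refine ⟨(hFc.mul (accDens_continuous hA z)).aestronglyMeasurable, ?_⟩
    rw [hasFiniteIntegral_iff_ofReal (ae_of_all _ (hFa0 z))]
    exact lt_of_le_of_lt (hIFle z) ENNReal.ofReal_lt_top
  -- convergence of the real integrals
  have hreal_a : Filter.Tendsto (fun n => ∫ y, accDens πd Jd (xseq n) y ∂(leb S))
      Filter.atTop (nhds (∫ y, accDens πd Jd x y ∂(leb S))) := by
    have h1 : ∀ z : S, ∫ y, accDens πd Jd z y ∂(leb S)
        = (∫⁻ y, ENNReal.ofReal (accDens πd Jd z y) ∂(leb S)).toReal := fun z =>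
      integral_eq_lintegral_of_nonneg_ae (ae_of_all _ (ha0 z))
        (accDens_continuous hA z).aestronglyMeasurable
    simp only [h1]
    exact (ENNReal.tendsto_toReal (hane x)).comp hIa
  have hreal_Fa : Filter.Tendsto (fun n => ∫ y, F y * accDens πd Jd (xseq n) y ∂(leb S))
      Filter.atTop (nhds (∫ y, F y * accDens πd Jd x y ∂(leb S))) := by
    have h1 : ∀ z : S, ∫ y, F y * accDens πd Jd z y ∂(leb S)
        = (∫⁻ y, ENNReal.ofReal (F y * accDens πd Jd z y) ∂(leb S)).toReal := fun z =>
      integral_eq_lintegral_of_nonneg_ae (ae_of_all _ (hFa0 z))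
        (hFc.mul (accDens_continuous hA z)).aestronglyMeasurable
    simp only [h1]
    exact (ENNReal.tendsto_toReal (ne_top_of_le_ne_top ENNReal.ofReal_ne_top (hIFle x))).comp hIFa
  -- representation of the integral against the kernel
  have hacc_int : ∀ z : S, ∫ y, f y ∂(acc πd Jd z) = ∫ y, accDens πd Jd z y * f y ∂(leb S) := by
    intro z
    rw [acc]
    have hden : (fun y : S => ENNReal.ofReal (accDens πd Jd z y))
        = fun y : S => ((Real.toNNReal (accDens πd Jd z y) : ℝ≥0) : ℝ≥0∞) := rfl
    rw [hden, integral_withDensity_eq_integral_smul ((ham z).real_toNNReal) f]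
    congr 1
    funext y
    rw [NNReal.smul_def, Real.coe_toNNReal _ (ha0 z y), smul_eq_mul]
  have hsplit : ∀ z : S, ∫ y, accDens πd Jd z y * f y ∂(leb S)
      = (∫ y, F y * accDens πd Jd z y ∂(leb S)) - C * ∫ y, accDens πd Jd z y ∂(leb S) := by
    intro z
    have h1 : (fun y => accDens πd Jd z y * f y)
        = fun y => F y * accDens πd Jd z y - C * accDens πd Jd z y := by
      funext y; simp only [hFdef]; ring
    rw [h1, integral_sub (hInt_Fa z) ((hInt_a z).const_mul C), integral_const_mul]
  have hdirac : ∀ z : S,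
      ∫ y, f y ∂((ENNReal.ofReal (rej πd Jd z)) • Measure.dirac z) = rej πd Jd z * f z := by
    intro z
    rw [integral_smul_measure, integral_dirac' f z hfc.stronglyMeasurable,
      ENNReal.toReal_ofReal (hrej_nonneg z), smul_eq_mul]
  have hfin_acc : ∀ z : S, IsFiniteMeasure (acc πd Jd z) := fun z =>
    ⟨by rw [hacc_univ z]; exact lt_of_le_of_lt (hal z) ENNReal.one_lt_top⟩
  have hint_f_acc : ∀ z : S, Integrable f (acc πd Jd z) := by
    intro z
    haveI := hfin_acc z
    exact Integrable.mono' (integrable_const C) hfc.aestronglyMeasurable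
      (ae_of_all _ fun y => by rw [Real.norm_eq_abs]; exact hC y)
  have hfin_dir : ∀ z : S, IsFiniteMeasure ((ENNReal.ofReal (rej πd Jd z)) • Measure.dirac z) := by
    intro z
    refine ⟨?_⟩
    simp only [Measure.smul_apply, smul_eq_mul, measure_univ, mul_one]
    exact ENNReal.ofReal_lt_top
  have hint_f_dir : ∀ z : S,
      Integrable f ((ENNReal.ofReal (rej πd Jd z)) • Measure.dirac z) := by
    intro z
    haveI := hfin_dir z
    exact Integrable.mono' (integrable_const C) hfc.aestronglyMeasurable
      (ae_of_all _ fun y => by rw [Real.norm_eq_abs]; exact hC y)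
  have hrepr : ∀ z : S, ∫ y, f y ∂(mhK πd Jd z)
      = ((∫ y, F y * accDens πd Jd z y ∂(leb S)) - C * ∫ y, accDens πd Jd z y ∂(leb S))
        + (1 - (∫⁻ y, ENNReal.ofReal (accDens πd Jd z y) ∂(leb S)).toReal) * f z := by
    intro z
    rw [mhK, integral_add_measure (hint_f_acc z) (hint_f_dir z), hacc_int z, hsplit z,
      hdirac z, hrej_eq z]
  simp only [hrepr]
  have hfx : Filter.Tendsto (fun n => f (xseq n)) Filter.atTop (nhds (f x)) :=
    (hfc.tendsto x).comp hx
  have hrt : Filter.Tendsto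
      (fun n => 1 - (∫⁻ y, ENNReal.ofReal (accDens πd Jd (xseq n) y) ∂(leb S)).toReal)
      Filter.atTop
      (nhds (1 - (∫⁻ y, ENNReal.ofReal (accDens πd Jd x y) ∂(leb S)).toReal)) :=
    tendsto_const_nhds.sub ((ENNReal.tendsto_toReal (hane x)).comp hIa)
  exact (hreal_Fa.sub (hreal_a.const_mul C)).add (hrt.mul hfx)

end MHLDP
end
end

section
/- Let ν ∈ P(S) satisfy I(ν) < ∞ and write its Lebesgue decomposition ν = (1−p)·ν_λ + p·ν_s with p ∈ [0,1], ν_λ, ν_s ∈ P(S), ν_λ ≪ λ and ν_s ⊥ λ. Then the rate function decomposes as I(ν) = (1−p)·I(ν_λ) + p·I(ν_s). -/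
open MeasureTheory ProbabilityTheory Filter Set Metric
open scoped ENNReal NNReal Topology

noncomputable section

namespace MHLDP

open Classical

variable {d : ℕ} {S : Set (EuclideanSpace ℝ (Fin d))}

lemma relEnt_eq_top_of_not_ac {β : Type*} [MeasurableSpace β] {μ ν : Measure β}
    (h : ¬ μ ≪ ν) : relEnt μ ν = ⊤ := by
  rw [relEnt, if_neg (fun hc => h hc.1)]

lemma measurableSet_sndEqFst :
    MeasurableSet {p : S × S | p.2 = p.1} := by
  have h : {p : S × S | p.2 = p.1} =
      (fun p : S × S => ((p.1 : EuclideanSpace ℝ (Fin d)), (p.2 : EuclideanSpace ℝ (Fin d)))) ⁻¹'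
        {q : EuclideanSpace ℝ (Fin d) × EuclideanSpace ℝ (Fin d) | q.2 = q.1} := by
    ext p
    simp only [Set.mem_setOf_eq, Set.mem_preimage]
    exact ⟨fun h => by rw [h], fun h => Subtype.ext h⟩
  rw [h]
  exact ((isClosed_eq continuous_snd continuous_fst).measurableSet).preimage
    ((measurable_subtype_coe.comp measurable_fst).prodMk
      (measurable_subtype_coe.comp measurable_snd))

lemma measurable_kernel_singleton (q : Kernel S S) [IsMarkovKernel q] :
    Measurable fun x : S => q x {x} := by
  have h := Kernel.measurable_kernel_prodMk_left (κ := q) (measurableSet_sndEqFst (S := S))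
  have e : ∀ x : S, (Prod.mk x ⁻¹' {p : S × S | p.2 = p.1}) = {x} := by
    intro x; ext y
    simp [Set.mem_preimage, Set.mem_setOf_eq]
  simpa only [e] using h

lemma measurable_kernel_diff_singleton (q : Kernel S S) [IsMarkovKernel q]
    {N : Set S} (hN : MeasurableSet N) :
    Measurable fun x : S => q x (N \ {x}) := by
  have ht : MeasurableSet ({p : S × S | p.2 ∈ N} \ {p : S × S | p.2 = p.1}) :=
    (measurable_snd hN).diff measurableSet_sndEqFst
  have h := Kernel.measurable_kernel_prodMk_left (κ := q) ht
  have e : ∀ x : S, (Prod.mk x ⁻¹' ({p : S × S | p.2 ∈ N} \ {p : S × S | p.2 = p.1}))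
      = N \ {x} := by
    intro x; ext y
    simp [Set.mem_preimage, Set.mem_diff]
  simpa only [e] using h

lemma mhK_null (πd : S → ℝ) (Jd : S → S → ℝ) {x : S} {A : Set S}
    (hA : MeasurableSet A) (h0 : leb S A = 0) (hx : x ∉ A) : mhK πd Jd x A = 0 := by
  have h1 : acc πd Jd x A = 0 := by
    rw [acc, withDensity_apply _ hA, setLIntegral_measure_zero _ _ h0]
  have h2 : Measure.dirac x A = 0 := by
    rw [Measure.dirac_apply' _ hA, Set.indicator_of_notMem hx]
  simp [mhK, h1, h2]

lemma key_ge (πd : S → ℝ) (Jd : S → S → ℝ)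
    (ν νlam νsing : Measure S)
    (hνsing : IsProbabilityMeasure νsing)
    (p : ℝ≥0∞) (hp0 : p ≠ 0) (hp1 : p < 1)
    (hdec : ν = (1 - p) • νlam + p • νsing)
    (hlam_ac : νlam ≪ leb S) (hsing : Measure.MutuallySingular νsing (leb S))
    (q : Kernel S S) (hq : IsMarkovKernel q) (hinv : Invariant ν (fun x => q x)) :
    (1 - p) * rateI (mhK πd Jd) νlam + p * rateI (mhK πd Jd) νsing ≤
      ∫⁻ x, relEnt (q x) (mhK πd Jd x) ∂ν := by
  haveI := hq
  haveI := hνsing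
  by_cases htop : ∫⁻ x, relEnt (q x) (mhK πd Jd x) ∂ν = ⊤
  · exact htop ▸ le_top
  have hp_ne_top : p ≠ ⊤ := (hp1.trans_le le_top).ne
  have h1p0 : 1 - p ≠ 0 := by simp [tsub_eq_zero_iff_le, not_le, hp1]
  have h1pt : 1 - p ≠ ⊤ := ((tsub_le_self).trans_lt ENNReal.one_lt_top).ne
  obtain ⟨s, hs, hs1, hs2⟩ := hsing
  have hN : MeasurableSet (sᶜ) := hs.compl
  set N := sᶜ with hNdef
  have hlebN : leb S N = 0 := hs2
  have hsingNc : νsing Nᶜ = 0 := by rw [hNdef, compl_compl]; exact hs1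
  have hlamN : νlam N = 0 := hlam_ac hlebN
  have hgmeas : Measurable fun x : S => q x (N \ {x}) := measurable_kernel_diff_singleton q hN
  have hβmeas : Measurable fun x : S => q x {x} := measurable_kernel_singleton q
  have hβle : ∀ x : S, q x {x} ≤ 1 := fun x => by
    haveI := hq.isProbabilityMeasure x
    exact prob_le_one
  -- the bad set where q is not absolutely continuous w.r.t. K
  set W := {x : S | q x (N \ {x}) ≠ 0} with hWdef
  have hW : MeasurableSet W := by
    have e : W = (fun x : S => q x (N \ {x})) ⁻¹' ({0}ᶜ) := rfl
    rw [e]; exact hgmeas (measurableSet_singleton 0).compl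
  have hrelW : ∀ x ∈ W, relEnt (q x) (mhK πd Jd x) = ⊤ := by
    intro x hx
    refine relEnt_eq_top_of_not_ac (fun hac => hx ?_)
    exact hac (mhK_null πd Jd (hN.diff (measurableSet_singleton x))
      (measure_mono_null Set.diff_subset hlebN) (fun h => h.2 rfl))
  have hWnull : ν W = 0 := by
    by_contra h
    apply htop
    refine top_le_iff.mp ?_
    calc (⊤ : ℝ≥0∞) = ⊤ * ν W := (ENNReal.top_mul h).symm
      _ = ∫⁻ _ in W, ⊤ ∂ν := by rw [setLIntegral_const, mul_comm]
      _ = ∫⁻ x, W.indicator (fun _ => ⊤) x ∂ν := (lintegral_indicator hW _).symm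
      _ ≤ ∫⁻ x, relEnt (q x) (mhK πd Jd x) ∂ν := by
          refine lintegral_mono fun x => ?_
          by_cases hx : x ∈ W
          · rw [Set.indicator_of_mem hx, hrelW x hx]
          · rw [Set.indicator_of_notMem hx]; exact zero_le
  have hg0 : ∀ᵐ x ∂ν, q x (N \ {x}) = 0 := by
    rw [ae_iff]; simpa [hWdef] using hWnull
  -- restriction identity
  have hres : ν.restrict N = p • νsing := by
    ext A hA
    rw [Measure.restrict_apply hA, hdec]
    simp only [Measure.coe_add, Measure.coe_smul, Pi.add_apply, Pi.smul_apply, smul_eq_mul]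
    have h1 : νlam (A ∩ N) = 0 := measure_mono_null Set.inter_subset_right hlamN
    have h2 : νsing (A ∩ N) = νsing A := by
      have h3 : νsing (A \ N) = 0 := measure_mono_null (fun y hy => hy.2) hsingNc
      have h4 := measure_inter_add_diff (μ := νsing) A hN
      rw [← h4, h3, add_zero]
    rw [h1, h2, mul_zero, zero_add]
  have hνN : ν N = p := by
    have hsN : νsing N = 1 := by
      have h := measure_add_measure_compl (μ := νsing) hN
      rw [hsingNc, add_zero, measure_univ] at h; exact h
    rw [hdec]
    simp [hlamN, hsN]
  -- a.e. identity for q x N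
  have hqN : ∀ᵐ x ∂ν, q x N = N.indicator (fun x => q x {x}) x := by
    filter_upwards [hg0] with x hx
    have h := measure_inter_add_diff (μ := q x) N (measurableSet_singleton x)
    by_cases hxN : x ∈ N
    · rw [Set.indicator_of_mem hxN, ← h, hx, add_zero,
        Set.inter_eq_self_of_subset_right (Set.singleton_subset_iff.mpr hxN)]
    · rw [Set.indicator_of_notMem hxN, ← h, hx, add_zero,
        Set.inter_singleton_eq_empty.mpr hxN, measure_empty]
  have hβint : ∫⁻ x, q x {x} ∂νsing = 1 := by
    have h := hinv N hN
    rw [hνN, lintegral_congr_ae hqN, lintegral_indicator hN] at h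
    rw [show (∫⁻ x in N, q x {x} ∂ν) = ∫⁻ x, q x {x} ∂(ν.restrict N) from rfl, hres,
      lintegral_smul_measure] at h
    exact ((ENNReal.mul_right_inj hp0 hp_ne_top).mp ((mul_one p).trans h)).symm
  have hβ1 : ∀ᵐ x ∂νsing, q x {x} = 1 := by
    have hsub : ∫⁻ x, ((1 : ℝ≥0∞) - q x {x}) ∂νsing = 0 := by
      rw [lintegral_sub hβmeas (by rw [hβint]; exact ENNReal.one_ne_top) (ae_of_all _ hβle),
        hβint, lintegral_one, measure_univ, tsub_self]
    have h0 := (lintegral_eq_zero_iff (measurable_const.sub hβmeas)).mp hsub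
    filter_upwards [h0] with x hx
    have hx' : (1 : ℝ≥0∞) - q x {x} = 0 := hx
    exact le_antisymm (hβle x) (tsub_eq_zero_iff_le.mp hx')
  have hsing_ac : νsing ≪ ν := by
    intro A hA
    rw [hdec] at hA
    simp only [Measure.coe_add, Measure.coe_smul, Pi.add_apply, Pi.smul_apply,
      smul_eq_mul] at hA
    rcases mul_eq_zero.mp (add_eq_zero.mp hA).2 with h | h
    · exact absurd h hp0
    · exact h
  have hlam_acν : νlam ≪ ν := by
    intro A hA
    rw [hdec] at hA
    simp only [Measure.coe_add, Measure.coe_smul, Pi.add_apply, Pi.smul_apply,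
      smul_eq_mul] at hA
    rcases mul_eq_zero.mp (add_eq_zero.mp hA).1 with h | h
    · exact absurd h h1p0
    · exact h
  have hdirac : ∀ᵐ x ∂νsing, (q x : Measure S) = Measure.dirac x := by
    filter_upwards [hβ1] with x hx
    haveI := hq.isProbabilityMeasure x
    have hcompl : q x ({x}ᶜ) = 0 := by
      rw [measure_compl (measurableSet_singleton x) (measure_ne_top _ _), measure_univ, hx,
        tsub_self]
    ext A hA
    have h2 : q x (A \ {x}) = 0 := measure_mono_null (fun y hy => hy.2) hcompl
    have h := measure_inter_add_diff (μ := q x) A (measurableSet_singleton x)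
    rw [Measure.dirac_apply' _ hA]
    by_cases hxA : x ∈ A
    · rw [← h, h2, add_zero,
        Set.inter_eq_self_of_subset_right (Set.singleton_subset_iff.mpr hxA), hx,
        Set.indicator_of_mem hxA, Pi.one_apply]
    · rw [← h, h2, add_zero, Set.inter_singleton_eq_empty.mpr hxA, measure_empty,
        Set.indicator_of_notMem hxA]
  have hmem_s : ∀ᵐ x ∂νsing, x ∈ N := by rw [ae_iff]; exact hsingNc
  have hinvs : Invariant νsing (fun x => q x) := by
    intro A hA
    have hh : (fun x => q x A) =ᵐ[νsing] (fun x => Measure.dirac x A) :=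
      hdirac.mono fun x hx => by simp only [hx]
    have h : ∫⁻ x, q x A ∂νsing = νsing A := by
      rw [lintegral_congr_ae hh]
      simp_rw [Measure.dirac_apply' _ hA]
      rw [lintegral_indicator hA]
      simp
    exact h.symm
  have hmem_l : ∀ᵐ x ∂νlam, x ∉ N := by rw [ae_iff]; simpa using hlamN
  have hinvl : Invariant νlam (fun x => q x) := by
    intro A hA
    have hAc : MeasurableSet (A ∩ Nᶜ) := hA.inter hN.compl
    have e1 : ν (A ∩ Nᶜ) = (1 - p) * νlam A := by
      rw [hdec]
      simp only [Measure.coe_add, Measure.coe_smul, Pi.add_apply, Pi.smul_apply, smul_eq_mul]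
      have h2 : νsing (A ∩ Nᶜ) = 0 := measure_mono_null Set.inter_subset_right hsingNc
      have h3 : νlam (A ∩ Nᶜ) = νlam A := by
        rw [← Set.diff_eq]
        exact measure_diff_null hlamN
      rw [h2, h3, mul_zero, add_zero]
    have e2 : ∫⁻ x, q x (A ∩ Nᶜ) ∂νsing = 0 := by
      have hae : ∀ᵐ x ∂νsing, q x (A ∩ Nᶜ) = 0 := by
        filter_upwards [hdirac, hmem_s] with x hx hxN
        rw [hx, Measure.dirac_apply' _ hAc,
          Set.indicator_of_notMem (fun hmem => hmem.2 hxN)]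
      rw [lintegral_congr_ae hae, lintegral_zero]
    have e3 : ∫⁻ x, q x (A ∩ Nᶜ) ∂νlam = νlam A := by
      have h := hinv (A ∩ Nᶜ) hAc
      rw [e1, hdec, lintegral_add_measure, lintegral_smul_measure, lintegral_smul_measure,
        smul_eq_mul, smul_eq_mul, e2, mul_zero, add_zero] at h
      exact ((ENNReal.mul_right_inj h1p0 h1pt).mp h).symm
    have e4 : ∀ᵐ x ∂νlam, q x A = q x (A ∩ Nᶜ) := by
      filter_upwards [hlam_acν.ae_le hg0, hmem_l] with x hx hxN
      have hqxN : q x N = 0 := by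
        have h := measure_inter_add_diff (μ := q x) N (measurableSet_singleton x)
        rw [← h, hx, add_zero, Set.inter_singleton_eq_empty.mpr hxN, measure_empty]
      have h5 : q x (A ∩ N) = 0 := measure_mono_null Set.inter_subset_right hqxN
      have h := measure_inter_add_diff (μ := q x) A hN
      rw [Set.diff_eq] at h
      rw [← h, h5, zero_add]
    rw [lintegral_congr_ae e4, e3]
  have hwl : rateI (mhK πd Jd) νlam ≤ ∫⁻ x, relEnt (q x) (mhK πd Jd x) ∂νlam := by
    unfold rateI
    exact iInf_le_of_le q (iInf_le_of_le hq (iInf_le_of_le hinvl le_rfl))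
  have hws : rateI (mhK πd Jd) νsing ≤ ∫⁻ x, relEnt (q x) (mhK πd Jd x) ∂νsing := by
    unfold rateI
    exact iInf_le_of_le q (iInf_le_of_le hq (iInf_le_of_le hinvs le_rfl))
  calc (1 - p) * rateI (mhK πd Jd) νlam + p * rateI (mhK πd Jd) νsing
      ≤ (1 - p) * ∫⁻ x, relEnt (q x) (mhK πd Jd x) ∂νlam
        + p * ∫⁻ x, relEnt (q x) (mhK πd Jd x) ∂νsing :=
        add_le_add (mul_le_mul_right hwl _) (mul_le_mul_right hws _)
    _ = ∫⁻ x, relEnt (q x) (mhK πd Jd x) ∂ν := by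
        rw [hdec, lintegral_add_measure, lintegral_smul_measure, lintegral_smul_measure,
          smul_eq_mul, smul_eq_mul]

lemma key_le (πd : S → ℝ) (Jd : S → S → ℝ)
    (ν νlam νsing : Measure S)
    (p : ℝ≥0∞) (hp : p ≤ 1) (hp0 : p ≠ 0) (hp1 : p < 1)
    (hdec : ν = (1 - p) • νlam + p • νsing)
    (hlam_ac : νlam ≪ leb S) (hsing : Measure.MutuallySingular νsing (leb S)) :
    rateI (mhK πd Jd) ν ≤
      (1 - p) * rateI (mhK πd Jd) νlam + p * rateI (mhK πd Jd) νsing := by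
  by_cases hb : (1 - p) * rateI (mhK πd Jd) νlam + p * rateI (mhK πd Jd) νsing = ⊤
  · exact hb ▸ le_top
  have h1p0 : 1 - p ≠ 0 := by simp [tsub_eq_zero_iff_le, not_le, hp1]
  have hB : rateI (mhK πd Jd) νlam ≠ ⊤ := by
    intro h
    exact hb (by rw [h, ENNReal.mul_top h1p0, top_add])
  have hC : rateI (mhK πd Jd) νsing ≠ ⊤ := by
    intro h
    exact hb (by rw [h, ENNReal.mul_top hp0, add_top])
  obtain ⟨s, hs, hs1, hs2⟩ := hsing
  have hN : MeasurableSet (sᶜ) := hs.compl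
  set N := sᶜ with hNdef
  have hsingNc : νsing Nᶜ = 0 := by rw [hNdef, compl_compl]; exact hs1
  have hlamN : νlam N = 0 := hlam_ac hs2
  apply ENNReal.le_of_forall_pos_le_add
  intro ε hε _
  have hε' : (ε : ℝ≥0∞) ≠ 0 := by exact_mod_cast hε.ne'
  have h1 : rateI (mhK πd Jd) νlam < rateI (mhK πd Jd) νlam + ε :=
    ENNReal.lt_add_right hB hε'
  have h2 : rateI (mhK πd Jd) νsing < rateI (mhK πd Jd) νsing + ε :=
    ENNReal.lt_add_right hC hε'
  unfold rateI at h1 h2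
  obtain ⟨q1, h1⟩ := iInf_lt_iff.mp h1
  obtain ⟨hq1, h1⟩ := iInf_lt_iff.mp h1
  obtain ⟨hi1, h1⟩ := iInf_lt_iff.mp h1
  obtain ⟨q2, h2⟩ := iInf_lt_iff.mp h2
  obtain ⟨hq2, h2⟩ := iInf_lt_iff.mp h2
  obtain ⟨hi2, h2⟩ := iInf_lt_iff.mp h2
  haveI := hq1
  haveI := hq2
  set qq := Kernel.piecewise hN q2 q1 with hqq
  haveI hqqM : IsMarkovKernel qq := by
    rw [hqq]; infer_instance
  have hmem_l : ∀ᵐ x ∂νlam, x ∉ N := by rw [ae_iff]; simpa using hlamN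
  have hmem_s : ∀ᵐ x ∂νsing, x ∈ N := by rw [ae_iff]; exact hsingNc
  have happ_l : ∀ᵐ x ∂νlam, (qq x : Measure S) = q1 x :=
    hmem_l.mono fun x hx => by rw [hqq, Kernel.piecewise_apply, if_neg hx]
  have happ_s : ∀ᵐ x ∂νsing, (qq x : Measure S) = q2 x :=
    hmem_s.mono fun x hx => by rw [hqq, Kernel.piecewise_apply, if_pos hx]
  have hinvq : Invariant ν (fun x => qq x) := by
    intro A hA
    have hcl : (fun x => qq x A) =ᵐ[νlam] (fun x => q1 x A) :=
      happ_l.mono fun x hx => by simp only [hx]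
    have hcs : (fun x => qq x A) =ᵐ[νsing] (fun x => q2 x A) :=
      happ_s.mono fun x hx => by simp only [hx]
    rw [hdec, lintegral_add_measure, lintegral_smul_measure, lintegral_smul_measure,
      lintegral_congr_ae hcl, lintegral_congr_ae hcs,
      ← hi1 A hA, ← hi2 A hA]
    simp [Measure.coe_add, Measure.coe_smul, Pi.add_apply, Pi.smul_apply, smul_eq_mul]
  have hle : rateI (mhK πd Jd) ν ≤ ∫⁻ x, relEnt (qq x) (mhK πd Jd x) ∂ν := by
    unfold rateI
    exact iInf_le_of_le qq (iInf_le_of_le hqqM (iInf_le_of_le hinvq le_rfl))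
  have heq : ∫⁻ x, relEnt (qq x) (mhK πd Jd x) ∂ν =
      (1 - p) * ∫⁻ x, relEnt (q1 x) (mhK πd Jd x) ∂νlam
        + p * ∫⁻ x, relEnt (q2 x) (mhK πd Jd x) ∂νsing := by
    have hcl : (fun x => relEnt (qq x) (mhK πd Jd x)) =ᵐ[νlam]
        (fun x => relEnt (q1 x) (mhK πd Jd x)) := happ_l.mono fun x hx => by simp only [hx]
    have hcs : (fun x => relEnt (qq x) (mhK πd Jd x)) =ᵐ[νsing]
        (fun x => relEnt (q2 x) (mhK πd Jd x)) := happ_s.mono fun x hx => by simp only [hx]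
    rw [hdec, lintegral_add_measure, lintegral_smul_measure, lintegral_smul_measure,
      lintegral_congr_ae hcl, lintegral_congr_ae hcs, smul_eq_mul, smul_eq_mul]
  calc rateI (mhK πd Jd) ν ≤ ∫⁻ x, relEnt (qq x) (mhK πd Jd x) ∂ν := hle
    _ = (1 - p) * ∫⁻ x, relEnt (q1 x) (mhK πd Jd x) ∂νlam
        + p * ∫⁻ x, relEnt (q2 x) (mhK πd Jd x) ∂νsing := heq
    _ ≤ (1 - p) * (rateI (mhK πd Jd) νlam + ε) + p * (rateI (mhK πd Jd) νsing + ε) :=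
        add_le_add (mul_le_mul_right h1.le _) (mul_le_mul_right h2.le _)
    _ = ((1 - p) * rateI (mhK πd Jd) νlam + p * rateI (mhK πd Jd) νsing)
        + ((1 - p) + p) * ε := by ring
    _ = ((1 - p) * rateI (mhK πd Jd) νlam + p * rateI (mhK πd Jd) νsing) + ε := by
        rw [tsub_add_cancel_of_le hp, one_mul]

end MHLDP


namespace MHLDP

/-- **Lemma 4.4(b).** Let `ν = (1−p)·ν_λ + p·ν_s` be the Lebesgue decomposition of a
measure with `I(ν) < ∞`. Then the rate function decomposes as
`I(ν) = (1−p)·I(ν_λ) + p·I(ν_s)`. -/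
theorem mh_rate_function_lebesgue_decomposition
    {d : ℕ} {S : Set (EuclideanSpace ℝ (Fin d))}
    (πd : S → ℝ) (Jd : S → S → ℝ) (π : Measure S) (hA : Assumptions πd Jd π)
    (ν νlam νsing : Measure S) (hν : IsProbabilityMeasure ν)
    (hνlam : IsProbabilityMeasure νlam) (hνsing : IsProbabilityMeasure νsing)
    (p : ℝ≥0∞) (hp : p ≤ 1)
    (hdec : ν = (1 - p) • νlam + p • νsing)
    (hlam_ac : νlam ≪ leb S) (hsing : Measure.MutuallySingular νsing (leb S))
    (hfin : rateI (mhK πd Jd) ν ≠ ⊤) :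
    rateI (mhK πd Jd) ν =
      (1 - p) * rateI (mhK πd Jd) νlam + p * rateI (mhK πd Jd) νsing := by
  by_cases hp0 : p = 0
  · subst hp0
    rw [show ν = νlam by simpa using hdec]
    simp
  by_cases hp1 : p = 1
  · subst hp1
    rw [show ν = νsing by simpa using hdec]
    simp
  have hplt : p < 1 := lt_of_le_of_ne hp hp1
  refine le_antisymm (key_le πd Jd ν νlam νsing p hp hp0 hplt hdec hlam_ac hsing) ?_
  refine le_iInf fun q => le_iInf fun hq => le_iInf fun hinv => ?_
  exact key_ge πd Jd ν νlam νsing hνsing p hp0 hplt hdec hlam_ac hsing q hq hinv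

end MHLDP
end
end

section
/- Let x ∈ S be such that r(x) > 0, and let ζ ∈ S with ζ ≠ x. Then the i-step Metropolis–Hastings transition probabilities satisfy K^{(i)}(x, {x}) ≥ r(x)^i > 0 for all i ≥ 1, while K^{(j)}(ζ, {x}) = 0 for all j ≥ 1. Consequently, for any positive integers l₀, n₀, the measure Σ_{i ≥ l₀} 2^{−i} K^{(i)}(x, ·) is not absolutely continuous with respect to Σ_{j ≥ n₀} 2^{−j} K^{(j)}(ζ, ·); i.e., the Donsker–Varadhan-type transitivity condition fails for K. -/
open MeasureTheory ProbabilityTheory Filter Set Metric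
open scoped ENNReal NNReal Topology

noncomputable section

namespace MHLDP

section TransitivityAux

variable {d : ℕ} {S : Set (EuclideanSpace ℝ (Fin d))}

lemma sigmaFinite_leb (hS : MeasurableSet S) : SigmaFinite (leb S) := by
  refine ⟨⟨⟨fun n => Subtype.val ⁻¹' (spanningSets (volume : Measure (EuclideanSpace ℝ (Fin d))) n),
    fun _ => trivial, fun n => ?_, ?_⟩⟩⟩
  · rw [leb, (MeasurableEmbedding.subtype_coe hS).comap_preimage]
    exact lt_of_le_of_lt (measure_mono inter_subset_left) (measure_spanningSets_lt_top _ n)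
  · rw [← Set.preimage_iUnion, iUnion_spanningSets, Set.preimage_univ]

variable {πd : S → ℝ} {Jd : S → S → ℝ}

lemma measurable_accDens (hπ : Continuous πd) (hJ : Continuous fun p : S × S => Jd p.1 p.2) :
    Measurable fun p : S × S => ENNReal.ofReal (accDens πd Jd p.1 p.2) := by
  apply Measurable.ennreal_ofReal
  have hJm : Measurable fun p : S × S => Jd p.1 p.2 := hJ.measurable
  have hJm' : Measurable fun p : S × S => Jd p.2 p.1 :=
    (hJ.comp continuous_swap).measurable
  have hπ1 : Measurable fun p : S × S => πd p.1 := (hπ.comp continuous_fst).measurable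
  have hπ2 : Measurable fun p : S × S => πd p.2 := (hπ.comp continuous_snd).measurable
  unfold accDens hastingsRatio
  exact (Measurable.ite (measurableSet_eq_fun (hπ1.mul hJm) measurable_const)
    measurable_const (measurable_const.min ((hπ2.mul hJm').div (hπ1.mul hJm)))).mul hJm

lemma measurable_acc_apply (hS : MeasurableSet S) (hπ : Continuous πd)
    (hJ : Continuous fun p : S × S => Jd p.1 p.2) {A : Set S} (hAm : MeasurableSet A) :
    Measurable fun y : S => acc πd Jd y A := by
  haveI := sigmaFinite_leb hS
  unfold acc
  simp_rw [withDensity_apply _ hAm, ← lintegral_indicator hAm]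
  exact Measurable.lintegral_prod_right'
    (f := fun p : S × S => A.indicator (fun z => ENNReal.ofReal (accDens πd Jd p.1 z)) p.2)
    ((measurable_accDens hπ hJ).indicator (measurable_snd hAm))

lemma measurable_mhK (hS : MeasurableSet S) (hπ : Continuous πd)
    (hJ : Continuous fun p : S × S => Jd p.1 p.2) :
    Measurable (mhK πd Jd) := by
  apply Measure.measurable_of_measurable_coe
  intro A hAm
  have hrej : Measurable (rej πd Jd) := by
    unfold rej
    exact measurable_const.sub
      ((measurable_acc_apply hS hπ hJ MeasurableSet.univ).ennreal_toReal)
  have h1 : Measurable fun y : S => acc πd Jd y A := measurable_acc_apply hS hπ hJ hAm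
  simp only [mhK, Measure.coe_add, Pi.add_apply, Measure.smul_apply, smul_eq_mul]
  simp_rw [Measure.dirac_apply' _ hAm]
  exact h1.add ((hrej.ennreal_ofReal).mul (measurable_one.indicator hAm))

end TransitivityAux

end MHLDP

namespace MHLDP

/-- **Failure of the Donsker–Varadhan transitivity condition.** If `r(x) > 0` and
`ζ ≠ x`, then `K^{(i)}(x,{x}) ≥ r(x)^i > 0` for all `i ≥ 1` while `K^{(j)}(ζ,{x}) = 0`
for all `j ≥ 1`; consequently for any positive integers `l₀, n₀` the measure
`Σ_{i≥l₀} 2^{−i} K^{(i)}(x,·)` is not absolutely continuous with respect to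
`Σ_{j≥n₀} 2^{−j} K^{(j)}(ζ,·)`. -/
theorem mh_transitivity_condition_fails
    {d : ℕ} {S : Set (EuclideanSpace ℝ (Fin d))}
    (πd : S → ℝ) (Jd : S → S → ℝ) (π : Measure S) (hA : Assumptions πd Jd π)
    (x ζ : S) (hr : 0 < rej πd Jd x) (hne : ζ ≠ x) :
    (∀ i : ℕ, 1 ≤ i →
      ENNReal.ofReal (rej πd Jd x ^ i) ≤ kIter (mhK πd Jd) i x {x} ∧
      0 < kIter (mhK πd Jd) i x {x}) ∧
    (∀ j : ℕ, 1 ≤ j → kIter (mhK πd Jd) j ζ {x} = 0) ∧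
    (∀ l₀ n₀ : ℕ, 1 ≤ l₀ → 1 ≤ n₀ →
      ¬ (Measure.sum (fun i : ℕ => ((2 : ℝ≥0∞) ^ (l₀ + i))⁻¹ • kIter (mhK πd Jd) (l₀ + i) x) ≪
          Measure.sum (fun j : ℕ =>
            ((2 : ℝ≥0∞) ^ (n₀ + j))⁻¹ • kIter (mhK πd Jd) (n₀ + j) ζ))) := by
  classical
  rcases Nat.eq_zero_or_pos d with hd | hd
  · exact absurd (Subtype.ext (by subst hd; exact PiLp.ext fun i => i.elim0)) hne
  haveI : Nontrivial (EuclideanSpace ℝ (Fin d)) :=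
    ⟨0, EuclideanSpace.single ⟨0, hd⟩ 1, by
      intro h
      have := congrArg (fun v => v ⟨0, hd⟩) h
      simp [EuclideanSpace.single_apply] at this⟩
  have hS := hA.measS
  set K := mhK πd Jd with hK
  have hKm : Measurable K := measurable_mhK hS hA.pi_cont hA.J_cont
  have hxm : MeasurableSet ({x} : Set S) := measurableSet_singleton x
  have hbind : ∀ (n : ℕ) (y : S),
      kIter K (n + 1) y {x} = ∫⁻ z, K z {x} ∂ kIter K n y := fun n y =>
    Measure.bind_apply hxm hKm.aemeasurable
  have hKxx : ENNReal.ofReal (rej πd Jd x) ≤ K x {x} := by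
    have hd1 : Measure.dirac x ({x} : Set S) = 1 := by
      rw [Measure.dirac_apply' _ hxm, Set.indicator_of_mem (Set.mem_singleton x)]
      rfl
    have : K x {x}
        = acc πd Jd x {x} + ENNReal.ofReal (rej πd Jd x) * Measure.dirac x {x} := by
      simp [hK, mhK, Measure.smul_apply, smul_eq_mul]
    rw [this, hd1, mul_one]
    exact le_add_self
  have h1x : kIter K 1 x = K x := Measure.dirac_bind hKm x
  have claim1 : ∀ i : ℕ, ENNReal.ofReal (rej πd Jd x ^ (i + 1)) ≤ kIter K (i + 1) x {x} := by
    intro i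
    induction i with
    | zero => simpa [h1x, pow_one] using hKxx
    | succ n ih =>
      rw [hbind (n + 1) x]
      have hpt : ∀ z : S,
          ({x} : Set S).indicator (fun _ => ENNReal.ofReal (rej πd Jd x)) z ≤ K z {x} := by
        intro z
        by_cases hz : z = x
        · subst hz; simpa [Set.indicator_of_mem] using hKxx
        · simp [Set.indicator_of_notMem, hz]
      calc ENNReal.ofReal (rej πd Jd x ^ (n + 1 + 1))
          = ENNReal.ofReal (rej πd Jd x) * ENNReal.ofReal (rej πd Jd x ^ (n + 1)) := by
            rw [← ENNReal.ofReal_mul hr.le, ← pow_succ']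
        _ ≤ ENNReal.ofReal (rej πd Jd x) * kIter K (n + 1) x {x} := mul_le_mul_right ih _
        _ = ∫⁻ z, ({x} : Set S).indicator (fun _ => ENNReal.ofReal (rej πd Jd x)) z
              ∂ kIter K (n + 1) x := by
            rw [lintegral_indicator hxm, setLIntegral_const]
        _ ≤ ∫⁻ z, K z {x} ∂ kIter K (n + 1) x := lintegral_mono hpt
  have leb_x : leb S ({x} : Set S) = 0 := by
    rw [leb, comap_subtype_coe_apply hS, Set.image_singleton]
    exact measure_singleton _
  have hKy0 : ∀ y : S, y ≠ x → K y {x} = 0 := by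
    intro y hy
    have hacc : acc πd Jd y {x} = 0 := by
      rw [acc, withDensity_apply _ hxm, Measure.restrict_eq_zero.mpr leb_x,
        lintegral_zero_measure]
    have hdir : Measure.dirac y ({x} : Set S) = 0 := by
      rw [Measure.dirac_apply' _ hxm, Set.indicator_of_notMem (by simpa using hy)]
    simp [hK, mhK, Measure.smul_apply, smul_eq_mul, hacc, hdir]
  have claim2 : ∀ j : ℕ, kIter K (j + 1) ζ {x} = 0 := by
    intro j
    induction j with
    | zero =>
      rw [show kIter K 1 ζ = K ζ from Measure.dirac_bind hKm ζ]
      exact hKy0 ζ hne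
    | succ n ih =>
      rw [hbind (n + 1) ζ]
      refine le_antisymm ?_ zero_le
      calc ∫⁻ z, K z {x} ∂ kIter K (n + 1) ζ
          ≤ ∫⁻ z, ({x} : Set S).indicator (fun _ => K x {x}) z ∂ kIter K (n + 1) ζ := by
            refine lintegral_mono fun z => ?_
            by_cases hz : z = x
            · subst hz; simp [Set.indicator_of_mem]
            · simp [hKy0 z hz]
        _ = K x {x} * kIter K (n + 1) ζ {x} := by
            rw [lintegral_indicator hxm, setLIntegral_const]
        _ = 0 := by rw [ih, mul_zero]
  refine ⟨?_, ?_, ?_⟩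
  · intro i hi
    obtain ⟨n, rfl⟩ : ∃ n, i = n + 1 := ⟨i - 1, (Nat.succ_pred_eq_of_pos hi).symm⟩
    exact ⟨claim1 n,
      lt_of_lt_of_le (ENNReal.ofReal_pos.mpr (pow_pos hr _)) (claim1 n)⟩
  · intro j hj
    obtain ⟨n, rfl⟩ : ∃ n, j = n + 1 := ⟨j - 1, (Nat.succ_pred_eq_of_pos hj).symm⟩
    exact claim2 n
  · intro l₀ n₀ hl hn hac
    have hν : Measure.sum
        (fun j : ℕ => ((2 : ℝ≥0∞) ^ (n₀ + j))⁻¹ • kIter K (n₀ + j) ζ) {x} = 0 := by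
      rw [Measure.sum_apply _ hxm]
      refine ENNReal.tsum_eq_zero.mpr fun j => ?_
      have hz : kIter K (n₀ + j) ζ {x} = 0 := by
        obtain ⟨m, hm⟩ : ∃ m, n₀ + j = m + 1 := ⟨n₀ + j - 1, by omega⟩
        rw [hm]; exact claim2 m
      rw [Measure.smul_apply, smul_eq_mul, hz, mul_zero]
    have hμ := hac hν
    rw [Measure.sum_apply _ hxm] at hμ
    have h0 := ENNReal.tsum_eq_zero.mp hμ 0
    rw [Measure.smul_apply, smul_eq_mul] at h0
    have hpos : 0 < kIter K (l₀ + 0) x {x} := by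
      obtain ⟨m, hm⟩ : ∃ m, l₀ + 0 = m + 1 := ⟨l₀ - 1, by omega⟩
      rw [hm]
      exact lt_of_lt_of_le (ENNReal.ofReal_pos.mpr (pow_pos hr _)) (claim1 m)
    have h2 : ((2 : ℝ≥0∞) ^ (l₀ + 0))⁻¹ ≠ 0 :=
      ENNReal.inv_ne_zero.mpr (ENNReal.pow_ne_top (by norm_num))
    rcases mul_eq_zero.mp h0 with h | h
    · exact h2 h
    · exact hpos.ne' h


end MHLDP
end
end
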